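/- arXiv:1108.5792 — 2 statements merged into one kernel-verified Lean document; each statement's English description precedes it below -/
import Mathlib

section
/- For all integers k ≥ i ≥ 2 and all m, n ≥ 0, F_{k,i−1}(m,n) = G_{k,i}(m,n). -/
open scoped BigOperators

/-- A part of an overpartition: `(value, overlined?)`. -/
abbrev OPart : Type := ℕ × Bool

/-- Order key on parts, realizing `1̄ < 1 < 2̄ < 2 < ⋯`:
overlined `v` ↦ `2v − 1`, non-overlined `v` ↦ `2v`. -/
def okey (p : OPart) : ℕ := 2 * p.1 - (if p.2 then 1 else 0)

/-- `L` is an overpartition written with parts in non-increasing order: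
all parts are positive, the keys are non-increasing, and each overlined part
occurs at most once. -/
def IsOverpartition (L : List OPart) : Prop :=
  (∀ p ∈ L, 1 ≤ p.1) ∧ List.Chain' (fun p q => okey q ≤ okey p) L ∧
    ∀ v : ℕ, List.count ((v, true) : OPart) L ≤ 1

/-- The number partitioned by an overpartition. -/
def osum (L : List OPart) : ℕ := (L.map Prod.fst).sum

/-- Difference condition: `d_j − d_{j+k−1} ≥ 1` if `d_j` is overlined,
and `d_j − d_{j+k−1} ≥ 2` otherwise. -/
def DiffCond (k : ℕ) (L : List OPart) : Prop :=
  ∀ (j : ℕ) (p q : OPart), L[j]? = some p → L[j + k - 1]? = some q →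
    if p.2 then q.1 + 1 ≤ p.1 else q.1 + 2 ≤ p.1

/-- Overpartitions counted by `D_{k,i}`: the difference condition holds and `1`
occurs as a non-overlined part at most `i − 1` times. -/
def DCondition (k i : ℕ) (L : List OPart) : Prop :=
  IsOverpartition L ∧ DiffCond k L ∧ List.count (((1 : ℕ), false) : OPart) L ≤ i - 1

/-- `D_{k,i}(n)`. -/
noncomputable def Dnum (k i n : ℕ) : ℕ :=
  Nat.card {L : List OPart // DCondition k i L ∧ osum L = n}

/-- `D_{k,i}(m,n)`. -/
noncomputable def Dmn (k i m n : ℕ) : ℕ :=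
  Nat.card {L : List OPart // DCondition k i L ∧ L.length = m ∧ osum L = n}

/-- The smallest part (the last one in the non-increasing list) is overlined. -/
def SmallestOverlined (L : List OPart) : Prop :=
  ∃ p : OPart, L.getLast? = some p ∧ p.2 = true

/-- The smallest part is non-overlined. -/
def SmallestNonOverlined (L : List OPart) : Prop :=
  ∃ p : OPart, L.getLast? = some p ∧ p.2 = false

/-- `F_{k,i}(m,n)`. -/
noncomputable def Fmn (k i m n : ℕ) : ℕ :=
  Nat.card {L : List OPart // DCondition k i L ∧ L.length = m ∧ osum L = n ∧
    SmallestOverlined L}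

/-- `G_{k,i}(m,n)`. -/
noncomputable def Gmn (k i m n : ℕ) : ℕ :=
  Nat.card {L : List OPart // DCondition k i L ∧ L.length = m ∧ osum L = n ∧
    SmallestNonOverlined L}

/-- `(a;q)_n`. -/
noncomputable def qPoch (a q : ℂ) (n : ℕ) : ℂ := ∏ j ∈ Finset.range n, (1 - a * q ^ j)

/-- `(a;q)_∞`. -/
noncomputable def qPochInf (a q : ℂ) : ℂ := ∏' j : ℕ, (1 - a * q ^ j)

/-- `(−q;q)_{N−1}`, with the convention `(−q)_{−1} = 1/2` when `N = 0`. -/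
noncomputable def negqPochPred (q : ℂ) (N : ℕ) : ℂ :=
  if N = 0 then 1 / 2 else qPoch (-q) q (N - 1)

/-- From a tuple `(N_1, …, N_K)` (0-indexed), the value `N_j` for `1 ≤ j ≤ K`,
and `0` otherwise (in particular `N_{K+1} = 0`). -/
def Nval {K : ℕ} (N : Fin K → ℕ) (j : ℕ) : ℕ :=
  if h : 1 ≤ j ∧ j ≤ K then N ⟨j - 1, by omega⟩ else 0

/-- Non-increasing tuples `N_1 ≥ N_2 ≥ ⋯ ≥ N_K ≥ 0`. -/
def DecTuple (K : ℕ) : Type := {N : Fin K → ℕ // ∀ a b : Fin K, a ≤ b → N b ≤ N a}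

/-- An ordinary partition written as a non-increasing list of positive integers. -/
def IsPartitionList (L : List ℕ) : Prop :=
  (∀ p ∈ L, 1 ≤ p) ∧ List.Chain' (fun a b => b ≤ a) L

/-- Underlying value of the part at position `j`. -/
def valAt (L : List OPart) (j : ℕ) : ℕ := (L[j]?.map Prod.fst).getD 0

/-- Whether the part at position `j` is overlined. -/
def ovAt (L : List OPart) (j : ℕ) : Bool := (L[j]?.map Prod.snd).getD false

/-- In the Gordon marking process (parts treated in increasing order
`1̄ < 1 < 2̄ < 2 < ⋯`, i.e. from the end of the non-increasing list `L`),
the mark `r` is not available for the part at position `pos`, given the marking `m`: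
either an already-marked part with the same underlying value has mark `r`, or a part
whose underlying value is one less has mark `r` and the reuse exception (the
overlined version of the current value is a part of `L` and `r` is the smallest
mark used on parts of the preceding value) does not apply. -/
def Blocked (L : List OPart) (m : ℕ → ℕ) (pos r : ℕ) : Prop :=
  (∃ p', pos < p' ∧ p' < L.length ∧ valAt L p' = valAt L pos ∧ m p' = r) ∨
  (∃ p', p' < L.length ∧ valAt L p' + 1 = valAt L pos ∧ m p' = r ∧
     ¬((((valAt L pos, true) : OPart) ∈ L) ∧
        ∀ p'', p'' < L.length → valAt L p'' + 1 = valAt L pos → r ≤ m p''))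

/-- `m` is the Gordon marking of `L`: every part gets the smallest available
positive mark, parts being processed in increasing order. -/
def IsGordonMarking (L : List OPart) (m : ℕ → ℕ) : Prop :=
  ∀ pos, pos < L.length →
    1 ≤ m pos ∧ ¬Blocked L m pos (m pos) ∧ ∀ r, 1 ≤ r → r < m pos → Blocked L m pos r

/-- The number of `r`-marked parts. -/
def markCount (L : List OPart) (m : ℕ → ℕ) (r : ℕ) : ℕ :=
  ((Finset.range L.length).filter fun pos => m pos = r).card

/-- `U_{N_1,…,N_{k−1};i}`: overpartitions counted by `D_{k,i}` whose smallest part is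
overlined and whose Gordon marking has exactly `N_r` `r`-marked parts, `1 ≤ r ≤ k−1`. -/
def UGSet (k i : ℕ) (N : Fin (k - 1) → ℕ) : Set (List OPart) :=
  {L | DCondition k i L ∧ SmallestOverlined L ∧
    ∃ m : ℕ → ℕ, IsGordonMarking L m ∧ ∀ r : Fin (k - 1), markCount L m ((r : ℕ) + 1) = N r}

/-- `P_{N_1,…,N_{k−1};i}`: members of `U` all of whose `1`-marked parts are overlined. -/
def PGSet (k i : ℕ) (N : Fin (k - 1) → ℕ) : Set (List OPart) :=
  {L | DCondition k i L ∧ SmallestOverlined L ∧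
    ∃ m : ℕ → ℕ, IsGordonMarking L m ∧ (∀ r : Fin (k - 1), markCount L m ((r : ℕ) + 1) = N r) ∧
      ∀ pos, pos < L.length → m pos = 1 → ovAt L pos = true}

/-- `f_t(λ) + f_{t̄}(λ) + f_{t+1}(λ) = k − 1` for every positive `t` smaller than the
underlying value of the greatest `(k−1)`-marked part. -/
def QCondition (k : ℕ) (L : List OPart) (m : ℕ → ℕ) : Prop :=
  ∀ t : ℕ, 1 ≤ t → (∃ pos, pos < L.length ∧ m pos = k - 1 ∧ t < valAt L pos) →
    List.count ((t, false) : OPart) L + List.count ((t, true) : OPart) L +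
      List.count ((t + 1, false) : OPart) L = k - 1

/-- `Q_{N_1,…,N_{k−1};i}`. -/
def QGSet (k i : ℕ) (N : Fin (k - 1) → ℕ) : Set (List OPart) :=
  {L | DCondition k i L ∧ SmallestOverlined L ∧
    ∃ m : ℕ → ℕ, IsGordonMarking L m ∧ (∀ r : Fin (k - 1), markCount L m ((r : ℕ) + 1) = N r) ∧
      (∀ pos, pos < L.length → m pos = 1 → ovAt L pos = true) ∧ QCondition k L m}

/-- `Q_{N_1,…,N_{k−1};i}(n)` with an integer index `n` (empty when `n < 0`). -/
def QGSetZ (k i : ℕ) (N : Fin (k - 1) → ℕ) (n : ℤ) : Set (List OPart) :=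
  {L | L ∈ QGSet k i N ∧ (osum L : ℤ) = n}


namespace Stmt12Aux

/-- Flip the overline flag of the last part. -/
def flipLast (L : List OPart) : List OPart :=
  L.dropLast ++ ((L.getLast?).map (fun p => (p.1, !p.2))).toList

lemma flipLast_eq {L : List OPart} {p : OPart} (h : L.getLast? = some p) :
    flipLast L = L.dropLast ++ [(p.1, !p.2)] := by
  simp [flipLast, h]

lemma flipLast_flipLast {L : List OPart} {p : OPart} (h : L.getLast? = some p) :
    flipLast (flipLast L) = L := by
  rw [flipLast_eq h, flipLast_eq List.getLast?_concat, List.dropLast_concat,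
    Bool.not_not]
  obtain ⟨a, b⟩ := p
  exact List.dropLast_append_getLast? _ h

lemma okey_true (v : ℕ) : okey (v, true) = 2 * v - 1 := by simp [okey]

lemma okey_false (v : ℕ) : okey (v, false) = 2 * v := by simp [okey]

lemma count_concat (a x : OPart) (D : List OPart) :
    List.count a (D ++ [x]) = List.count a D + (if x = a then 1 else 0) := by
  rw [List.count_append, List.count_cons, List.count_nil]
  simp [beq_iff_eq]

lemma last_min {D : List OPart} {x z : OPart}
    (hc : List.Chain' (fun p q => okey q ≤ okey p) (D ++ [x])) (hz : z ∈ D) :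
    okey x ≤ okey z := by
  haveI : IsTrans OPart (fun p q => okey q ≤ okey p) :=
    ⟨fun a b c h1 h2 => le_trans h2 h1⟩
  unfold List.Chain' at hc
  rw [List.isChain_iff_pairwise, List.pairwise_append] at hc
  exact hc.2.2 z hz x (by simp)

lemma diffCond_concat {k : ℕ} (hk : 2 ≤ k) {D : List OPart} {x y : OPart} (hxy : x.1 = y.1)
    (h : DiffCond k (D ++ [x])) : DiffCond k (D ++ [y]) := by
  intro j p q hp hq
  rcases lt_trichotomy j D.length with hj | hj | hj
  · have hp' : (D ++ [x])[j]? = some p := by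
      rw [List.getElem?_append] at hp ⊢
      rw [if_pos hj] at hp ⊢; exact hp
    rcases lt_trichotomy (j + k - 1) D.length with hq' | hq' | hq'
    · have hq2 : (D ++ [x])[j + k - 1]? = some q := by
        rw [List.getElem?_append] at hq ⊢
        rw [if_pos hq'] at hq ⊢; exact hq
      exact h j p q hp' hq2
    · have hq2 : q = y := by
        rw [hq', List.getElem?_concat_length] at hq
        exact (Option.some_inj.mp hq).symm
      have hx : (D ++ [x])[j + k - 1]? = some x := by
        rw [hq', List.getElem?_concat_length]
      have := h j p x hp' hx
      subst hq2
      rw [← hxy]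
      exact this
    · exfalso
      rw [List.getElem?_eq_none (by simp; omega)] at hq
      simp at hq
  · exfalso
    have : (D ++ [y]).length ≤ j + k - 1 := by simp; omega
    rw [List.getElem?_eq_none this] at hq
    simp at hq
  · exfalso
    rw [List.getElem?_eq_none (by simp; omega)] at hp
    simp at hp

lemma forward (k i : ℕ) (hi2 : 2 ≤ i) (hik : i ≤ k) {D : List OPart} {v : ℕ}
    (h : DCondition k (i - 1) (D ++ [(v, true)])) :
    DCondition k i (D ++ [(v, false)]) := by
  obtain ⟨⟨hpos, hchain, hov⟩, hdiff, hcnt⟩ := h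
  have hv : 1 ≤ v := hpos (v, true) (by simp)
  refine ⟨⟨?_, ?_, ?_⟩, ?_, ?_⟩
  · intro p hp
    rcases List.mem_append.mp hp with h1 | h1
    · exact hpos p (List.mem_append.mpr (Or.inl h1))
    · simp at h1; subst h1; exact hv
  · unfold List.Chain' at hchain ⊢
    rw [List.isChain_append] at hchain ⊢
    refine ⟨hchain.1, List.isChain_singleton _, ?_⟩
    intro z hz y hy
    simp only [List.head?_cons, Option.mem_def, Option.some_inj] at hy
    subst hy
    have hzD : z ∈ D := List.mem_of_mem_getLast? hz
    have h1 : okey (v, true) ≤ okey z := hchain.2.2 z hz (v, true) (by simp)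
    have hz1 : 1 ≤ z.1 := hpos z (List.mem_append.mpr (Or.inl hzD))
    have hzne : z ≠ (v, true) := by
      intro hzeq
      have hvv := hov v
      rw [count_concat, if_pos rfl] at hvv
      have h2 : 0 < List.count ((v, true) : OPart) D :=
        List.count_pos_iff.mpr (hzeq ▸ hzD)
      omega
    obtain ⟨u, b⟩ := z
    have hu1 : 1 ≤ u := hz1
    cases b
    · rw [okey_true] at h1
      rw [okey_false] at h1 ⊢
      rw [okey_false]
      omega
    · have hune : u ≠ v := fun huv => hzne (by rw [huv])
      rw [okey_true, okey_true] at h1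
      rw [okey_false, okey_true]
      omega
  · intro w
    have hw := hov w
    rw [count_concat] at hw ⊢
    have h0 : (if ((v, false) : OPart) = (w, true) then 1 else 0) = 0 := by simp
    rw [h0]
    by_cases hwv : v = w
    · subst hwv
      rw [if_pos rfl] at hw
      omega
    · rw [if_neg (by simp [hwv])] at hw
      omega
  · exact diffCond_concat (x := (v, true)) (y := (v, false)) (le_trans hi2 hik) rfl hdiff
  · rw [count_concat] at hcnt ⊢
    have h0 : (if ((v, true) : OPart) = (((1 : ℕ), false) : OPart) then 1 else 0) = 0 := by
      simp
    have h1 : (if ((v, false) : OPart) = (((1 : ℕ), false) : OPart) then 1 else 0) ≤ 1 := by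
      split <;> omega
    rw [h0] at hcnt
    omega

lemma backward (k i : ℕ) (hi2 : 2 ≤ i) (hik : i ≤ k) {D : List OPart} {v : ℕ}
    (h : DCondition k i (D ++ [(v, false)])) :
    DCondition k (i - 1) (D ++ [(v, true)]) := by
  obtain ⟨⟨hpos, hchain, hov⟩, hdiff, hcnt⟩ := h
  have hv : 1 ≤ v := hpos (v, false) (by simp)
  have hmin : ∀ z ∈ D, okey (v, false) ≤ okey z := fun z hz => last_min hchain hz
  refine ⟨⟨?_, ?_, ?_⟩, ?_, ?_⟩
  · intro p hp
    rcases List.mem_append.mp hp with h1 | h1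
    · exact hpos p (List.mem_append.mpr (Or.inl h1))
    · simp at h1; subst h1; exact hv
  · unfold List.Chain' at hchain ⊢
    rw [List.isChain_append] at hchain ⊢
    refine ⟨hchain.1, List.isChain_singleton _, ?_⟩
    intro z hz y hy
    simp only [List.head?_cons, Option.mem_def, Option.some_inj] at hy
    subst hy
    have h1 : okey (v, false) ≤ okey z := hchain.2.2 z hz (v, false) (by simp)
    have h2 : okey (v, true) ≤ okey (v, false) := by
      rw [okey_true, okey_false]; omega
    exact le_trans h2 h1
  · intro w
    have hw := hov w
    rw [count_concat] at hw ⊢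
    have h0 : (if ((v, false) : OPart) = (w, true) then 1 else 0) = 0 := by simp
    rw [h0] at hw
    by_cases hwv : v = w
    · subst hwv
      rw [if_pos rfl]
      have hnot : ((v, true) : OPart) ∉ D := by
        intro hmem
        have h2 := hmin _ hmem
        rw [okey_false, okey_true] at h2
        omega
      rw [List.count_eq_zero.mpr hnot]
    · rw [if_neg (by simp [hwv])]
      omega
  · exact diffCond_concat (x := (v, false)) (y := (v, true)) (le_trans hi2 hik) rfl hdiff
  · rw [count_concat] at hcnt ⊢
    have h0 : (if ((v, true) : OPart) = (((1 : ℕ), false) : OPart) then 1 else 0) = 0 := by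
      simp
    rw [h0]
    by_cases hv1 : v = 1
    · subst hv1
      rw [if_pos rfl] at hcnt
      omega
    · rw [if_neg (by simp [hv1])] at hcnt
      have hnot : (((1 : ℕ), false) : OPart) ∉ D := by
        intro hmem
        have h2 := hmin _ hmem
        rw [okey_false, okey_false] at h2
        omega
      rw [List.count_eq_zero.mpr hnot]
      omega

lemma osum_concat (D : List OPart) (x : OPart) : osum (D ++ [x]) = osum D + x.1 := by
  simp [osum]

end Stmt12Aux


/-- `F_{k,i−1}(m,n) = G_{k,i}(m,n)` for `k ≥ i ≥ 2`. -/
theorem stmt12 (k i m n : ℕ) (hi2 : 2 ≤ i) (hik : i ≤ k) :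
    Fmn k (i - 1) m n = Gmn k i m n := by
  unfold Fmn Gmn
  apply Nat.card_congr
  refine ⟨fun L => ⟨Stmt12Aux.flipLast L.1, ?_⟩, fun L => ⟨Stmt12Aux.flipLast L.1, ?_⟩, ?_, ?_⟩
  · obtain ⟨L, hD, hlen, hsum, hsm⟩ := L
    obtain ⟨p, hp, hpt⟩ := hsm
    obtain ⟨v, b⟩ := p
    have hb : b = true := hpt
    subst hb
    have hrep : L.dropLast ++ [((v, true) : OPart)] = L :=
      List.dropLast_append_getLast? _ hp
    have hflip : Stmt12Aux.flipLast L = L.dropLast ++ [((v, false) : OPart)] := by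
      rw [Stmt12Aux.flipLast_eq hp]; rfl
    refine ⟨?_, ?_, ?_, ?_⟩
    · rw [hflip]
      rw [← hrep] at hD
      exact Stmt12Aux.forward k i hi2 hik hD
    · rw [hflip]
      rw [← hrep] at hlen
      simpa using hlen
    · rw [hflip]
      rw [← hrep] at hsum
      rw [Stmt12Aux.osum_concat] at hsum ⊢
      exact hsum
    · exact ⟨(v, false), by rw [hflip]; exact List.getLast?_concat, rfl⟩
  · obtain ⟨L, hD, hlen, hsum, hsm⟩ := L
    obtain ⟨p, hp, hpt⟩ := hsm
    obtain ⟨v, b⟩ := p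
    have hb : b = false := hpt
    subst hb
    have hrep : L.dropLast ++ [((v, false) : OPart)] = L :=
      List.dropLast_append_getLast? _ hp
    have hflip : Stmt12Aux.flipLast L = L.dropLast ++ [((v, true) : OPart)] := by
      rw [Stmt12Aux.flipLast_eq hp]; rfl
    refine ⟨?_, ?_, ?_, ?_⟩
    · rw [hflip]
      rw [← hrep] at hD
      exact Stmt12Aux.backward k i hi2 hik hD
    · rw [hflip]
      rw [← hrep] at hlen
      simpa using hlen
    · rw [hflip]
      rw [← hrep] at hsum
      rw [Stmt12Aux.osum_concat] at hsum ⊢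
      exact hsum
    · exact ⟨(v, true), by rw [hflip]; exact List.getLast?_concat, rfl⟩
  · rintro ⟨L, hD, hlen, hsum, p, hp, hpt⟩
    exact Subtype.ext (Stmt12Aux.flipLast_flipLast hp)
  · rintro ⟨L, hD, hlen, hsum, p, hp, hpt⟩
    exact Subtype.ext (Stmt12Aux.flipLast_flipLast hp)
end

section
/- For all integers k ≥ 1 and all m, n ≥ 0, G_{k,1}(m,n) = F_{k,k}(m, n−m). -/
open scoped BigOperators

namespace Stmt13Aux

def dec1 (p : OPart) : OPart := (p.1 - 1, p.2)
def inc1 (p : OPart) : OPart := (p.1 + 1, p.2)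

def fwdMap (L : List OPart) : List OPart :=
  L.dropLast.map dec1 ++ (L.getLast?.map (fun p => ((p.1 - 1, true) : OPart))).toList

def bwdMap (L : List OPart) : List OPart :=
  L.dropLast.map inc1 ++ (L.getLast?.map (fun p => ((p.1 + 1, false) : OPart))).toList

lemma fwdMap_concat (M : List OPart) (p : OPart) :
    fwdMap (M ++ [p]) = M.map dec1 ++ [((p.1 - 1, true) : OPart)] := by
  simp [fwdMap]

lemma bwdMap_concat (M : List OPart) (p : OPart) :
    bwdMap (M ++ [p]) = M.map inc1 ++ [((p.1 + 1, false) : OPart)] := by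
  simp [bwdMap]

lemma osum_cons (a : OPart) (T : List OPart) : osum (a :: T) = a.1 + osum T := by
  simp [osum]

lemma osum_append (A B : List OPart) : osum (A ++ B) = osum A + osum B := by
  simp [osum]

lemma length_le_osum (L : List OPart) (h : ∀ p ∈ L, 1 ≤ p.1) : L.length ≤ osum L := by
  induction L with
  | nil => simp [osum]
  | cons a T ih =>
    have h1 := h a (by simp)
    have h2 := ih (fun p hp => h p (by simp [hp]))
    rw [osum_cons]
    simp only [List.length_cons]
    omega

lemma osum_map_dec (M : List OPart) (h : ∀ q ∈ M, 1 ≤ q.1) :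
    osum (M.map dec1) + M.length = osum M := by
  induction M with
  | nil => simp [osum]
  | cons a T ih =>
    have h1 := h a (by simp)
    have h2 := ih (fun p hp => h p (by simp [hp]))
    simp only [List.map_cons, osum_cons, List.length_cons, dec1]
    omega

lemma osum_map_inc (M : List OPart) :
    osum (M.map inc1) = osum M + M.length := by
  induction M with
  | nil => simp [osum]
  | cons a T ih =>
    simp only [List.map_cons, osum_cons, List.length_cons, inc1, ih]
    omega

lemma count_map_dec (M : List OPart) (h : ∀ q ∈ M, 2 ≤ q.1) (w : ℕ) (b : Bool) (hw : 1 ≤ w) :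
    (M.map dec1).count ((w, b) : OPart) = M.count ((w + 1, b) : OPart) := by
  induction M with
  | nil => simp
  | cons a T ih =>
    have ha := h a (by simp)
    have hT := ih (fun q hq => h q (by simp [hq]))
    simp only [List.map_cons, List.count_cons, hT]
    congr 1
    by_cases hc : a = ((w + 1, b) : OPart)
    · subst hc
      simp [dec1]
    · have : dec1 a ≠ ((w, b) : OPart) := by
        intro hd
        apply hc
        have h1 : a.1 - 1 = w := congrArg Prod.fst hd
        have h2 : a.2 = b := congrArg Prod.snd hd
        have : a.1 = w + 1 := by omega
        exact Prod.ext this h2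
      simp [this, hc]

lemma not_mem_map_dec (M : List OPart) (w : ℕ) (b : Bool)
    (h : ∀ q ∈ M, q.2 = b → w + 1 ≤ q.1 - 1) : ((w, b) : OPart) ∉ M.map dec1 := by
  intro hm
  obtain ⟨q, hq, hd⟩ := List.mem_map.mp hm
  have h1 : q.1 - 1 = w := congrArg Prod.fst hd
  have h2 : q.2 = b := congrArg Prod.snd hd
  have := h q hq h2
  omega

lemma count_map_inc (M : List OPart) (w : ℕ) (b : Bool) :
    (M.map inc1).count ((w + 1, b) : OPart) = M.count ((w, b) : OPart) := by
  induction M with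
  | nil => simp
  | cons a T ih =>
    simp only [List.map_cons, List.count_cons, ih]
    congr 1
    by_cases hc : a = ((w, b) : OPart)
    · subst hc
      simp [inc1]
    · have : inc1 a ≠ ((w + 1, b) : OPart) := by
        intro hd
        apply hc
        have h1 : a.1 + 1 = w + 1 := congrArg Prod.fst hd
        have h2 : a.2 = b := congrArg Prod.snd hd
        exact Prod.ext (by omega) h2
      simp [this, hc]

lemma pairwise_of_chain' {L : List OPart}
    (h : List.Chain' (fun p q => okey q ≤ okey p) L) :
    L.Pairwise (fun p q => okey q ≤ okey p) := by
  haveI : IsTrans OPart (fun p q : OPart => okey q ≤ okey p) :=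
    ⟨fun a b c h1 h2 => le_trans h2 h1⟩
  exact List.isChain_iff_pairwise.mp h

lemma chain'_of_pairwise {L : List OPart}
    (h : L.Pairwise (fun p q => okey q ≤ okey p)) :
    List.Chain' (fun p q => okey q ≤ okey p) L := by
  haveI : IsTrans OPart (fun p q : OPart => okey q ≤ okey p) :=
    ⟨fun a b c h1 h2 => le_trans h2 h1⟩
  exact List.isChain_iff_pairwise.mpr h

lemma key_ge_of_mem {M : List OPart} {x : OPart}
    (h : List.Chain' (fun p q => okey q ≤ okey p) (M ++ [x])) :
    ∀ q ∈ M, okey x ≤ okey q := by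
  have := List.pairwise_append.mp (pairwise_of_chain' h)
  intro q hq
  exact this.2.2 q hq x (by simp)

lemma exists_first_index (L : List OPart) (a : OPart) (k : ℕ) (hk : 1 ≤ k)
    (h : k ≤ L.count a) : ∃ j, L[j]? = some a ∧ j + k - 1 < L.length := by
  induction L generalizing k with
  | nil => simp at h; omega
  | cons x T ih =>
    by_cases hx : x = a
    · subst hx
      refine ⟨0, by simp, ?_⟩
      have h1 : T.count x ≤ T.length := List.count_le_length
      have h2 : k - 1 ≤ T.count x := by
        have : List.count x (x :: T) = List.count x T + 1 := List.count_cons_self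
        omega
      simp only [List.length_cons]
      omega
    · have hT : k ≤ T.count a := by
        rw [List.count_cons] at h
        simp [hx] at h
        omega
      obtain ⟨j, hj1, hj2⟩ := ih k hk hT
      exact ⟨j + 1, by simpa using hj1, by simp only [List.length_cons]; omega⟩

lemma count_two_le (L : List OPart) (k : ℕ) (hk : 1 ≤ k)
    (hop : ∀ p ∈ L, 1 ≤ p.1) (hd : DiffCond k L) :
    L.count (((2 : ℕ), false) : OPart) ≤ k - 1 := by
  by_contra hcon
  have h : k ≤ L.count (((2 : ℕ), false) : OPart) := by omega
  obtain ⟨j, hj1, hj2⟩ := exists_first_index L _ k hk h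
  have hq : L[j + k - 1]? = some L[j + k - 1] := List.getElem?_eq_getElem hj2
  have hone := hop _ (List.getElem_mem hj2)
  have := hd j _ _ hj1 hq
  simp only [Prod.snd] at this
  norm_num at this
  omega

lemma count_le_concat (M : List OPart) (a x : OPart) :
    M.count a ≤ (M ++ [x]).count a := by
  rw [List.count_append]
  exact Nat.le_add_right _ _

lemma fwd_mem (k : ℕ) (hk : 2 ≤ k) (M : List OPart) (v : ℕ)
    (h : DCondition k 1 (M ++ [((v, false) : OPart)])) :
    DCondition k k (M.map dec1 ++ [((v - 1, true) : OPart)]) := by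
  obtain ⟨⟨hpos, hchain, hcount⟩, hdiff, hone⟩ := h
  have hv1 : 1 ≤ v := hpos (v, false) (by simp)
  have hnm : ((1, false) : OPart) ∉ (M ++ [((v, false) : OPart)]) :=
    List.count_eq_zero.mp (by omega)
  have hv2 : 2 ≤ v := by
    rcases Nat.lt_or_ge v 2 with h' | h'
    · have : v = 1 := by omega
      subst this
      exact absurd (by simp : ((1, false) : OPart) ∈ (M ++ [((1, false) : OPart)])) hnm
    · exact h'
  have hMk : ∀ q ∈ M, 2 * v ≤ okey q := by
    have := key_ge_of_mem hchain
    intro q hq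
    have h2 := this q hq
    simpa [okey] using h2
  have hMv : ∀ q ∈ M, v ≤ q.1 := by
    intro q hq
    have := hMk q hq
    by_cases hb : q.2 <;> simp [okey, hb] at this <;> omega
  have hMov : ∀ q ∈ M, q.2 = true → v + 1 ≤ q.1 := by
    intro q hq hb
    have := hMk q hq
    simp [okey, hb] at this
    omega
  refine ⟨⟨?_, ?_, ?_⟩, ?_, ?_⟩
  · -- positivity
    intro p hp
    rcases List.mem_append.mp hp with hp | hp
    · obtain ⟨q, hq, rfl⟩ := List.mem_map.mp hp
      have := hMv q hq
      simp only [dec1]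
      omega
    · have : p = ((v - 1, true) : OPart) := by simpa using hp
      subst this
      simp only
      omega
  · -- chain'
    apply chain'_of_pairwise
    rw [List.pairwise_append]
    refine ⟨?_, by simp, ?_⟩
    · rw [List.pairwise_map]
      have hPM := (List.pairwise_append.mp (pairwise_of_chain' hchain)).1
      refine hPM.imp_of_mem ?_
      intro a b ha hb hab
      have h1 := hMv a ha
      have h2 := hMv b hb
      by_cases ba : a.2 <;> by_cases bb : b.2 <;>
        simp [okey, dec1, ba, bb] at hab ⊢ <;> omega
    · intro a ha b hb
      have hb' : b = ((v - 1, true) : OPart) := by simpa using hb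
      subst hb'
      obtain ⟨q, hq, rfl⟩ := List.mem_map.mp ha
      have h1 := hMv q hq
      by_cases bq : q.2 <;> simp [okey, dec1, bq] <;> omega
  · -- overline counts
    intro w
    rw [List.count_append]
    by_cases hw : w = v - 1
    · subst hw
      have h0 : ((v - 1, true) : OPart) ∉ M.map dec1 := by
        apply not_mem_map_dec
        intro q hq hb
        have := hMov q hq hb
        omega
      rw [List.count_eq_zero.mpr h0]
      simp
    · have h1 : List.count ((w, true) : OPart) [((v - 1, true) : OPart)] = 0 := by
        apply List.count_eq_zero.mpr
        simp [hw]
      rw [h1]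
      rcases Nat.eq_zero_or_pos w with rfl | hwpos
      · have h0 : ((0, true) : OPart) ∉ M.map dec1 := by
          apply not_mem_map_dec
          intro q hq hb
          have := hMov q hq hb
          omega
        rw [List.count_eq_zero.mpr h0]
        omega
      · rw [count_map_dec M (fun q hq => le_trans hv2 (hMv q hq)) w true hwpos]
        have := hcount (w + 1)
        have h2 := count_le_concat M ((w + 1, true) : OPart) ((v, false) : OPart)
        omega
  · -- DiffCond
    intro j p q hp hq
    have hlen : j + k - 1 < (M.map dec1 ++ [((v - 1, true) : OPart)]).length :=
      (List.getElem?_eq_some_iff.mp hq).1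
    rw [List.length_append, List.length_map, List.length_singleton] at hlen
    have hjM : j < M.length := by omega
    have hp' : p = dec1 M[j] := by
      rw [List.getElem?_append_left (by simpa using hjM), List.getElem?_map,
        List.getElem?_eq_getElem hjM] at hp
      exact (Option.some_inj.mp hp).symm
    have horigp : (M ++ [((v, false) : OPart)])[j]? = some M[j] := by
      rw [List.getElem?_append_left hjM]
      exact List.getElem?_eq_getElem hjM
    rcases Nat.lt_or_ge (j + k - 1) M.length with hcase | hcase
    · have hq' : q = dec1 M[j + k - 1] := by
        rw [List.getElem?_append_left (by simpa using hcase), List.getElem?_map,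
          List.getElem?_eq_getElem hcase] at hq
        exact (Option.some_inj.mp hq).symm
      have horigq : (M ++ [((v, false) : OPart)])[j + k - 1]? = some M[j + k - 1] := by
        rw [List.getElem?_append_left hcase]
        exact List.getElem?_eq_getElem hcase
      have horig := hdiff j _ _ horigp horigq
      have hval := hMv _ (List.getElem_mem hcase)
      subst hp' hq'
      by_cases hb : M[j].2 <;> simp [dec1, hb] at horig ⊢ <;> omega
    · have heq : j + k - 1 = M.length := by omega
      have hq' : q = ((v - 1, true) : OPart) := by
        rw [heq] at hq
        have : (M.map dec1 ++ [((v - 1, true) : OPart)])[M.length]? =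
            some ((v - 1, true) : OPart) := by
          have h3 : (M.map dec1).length = M.length := List.length_map _
          rw [← h3]
          simp
        rw [this] at hq
        exact (Option.some_inj.mp hq).symm
      have horigq : (M ++ [((v, false) : OPart)])[j + k - 1]? =
          some ((v, false) : OPart) := by
        rw [heq]
        simp
      have horig := hdiff j _ _ horigp horigq
      subst hp' hq'
      by_cases hb : M[j].2 <;> simp [dec1, hb] at horig ⊢ <;> omega
  · -- 1-count
    rw [List.count_append]
    have h1 : List.count ((1, false) : OPart) [((v - 1, true) : OPart)] = 0 := by
      apply List.count_eq_zero.mpr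
      simp
    rw [h1, count_map_dec M (fun q hq => le_trans hv2 (hMv q hq)) 1 false (by norm_num)]
    norm_num
    have h2 := count_le_concat M (((2 : ℕ), false) : OPart) ((v, false) : OPart)
    have h3 := count_two_le (M ++ [((v, false) : OPart)]) k (by omega) hpos hdiff
    omega

lemma bwd_mem (k : ℕ) (hk : 2 ≤ k) (M : List OPart) (u : ℕ)
    (h : DCondition k k (M ++ [((u, true) : OPart)])) :
    DCondition k 1 (M.map inc1 ++ [((u + 1, false) : OPart)]) := by
  obtain ⟨⟨hpos, hchain, hcount⟩, hdiff, hone⟩ := h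
  have hu1 : 1 ≤ u := hpos (u, true) (by simp)
  have hMk : ∀ q ∈ M, 2 * u - 1 ≤ okey q := by
    have := key_ge_of_mem hchain
    intro q hq
    have h2 := this q hq
    simpa [okey] using h2
  have hMv : ∀ q ∈ M, u ≤ q.1 := by
    intro q hq
    have := hMk q hq
    by_cases hb : q.2 <;> simp [okey, hb] at this <;> omega
  have hnotmem : ((u, true) : OPart) ∉ M := by
    have h1 := hcount u
    rw [List.count_append] at h1
    have h2 : List.count ((u, true) : OPart) [((u, true) : OPart)] = 1 := by simp
    rw [h2] at h1
    exact List.count_eq_zero.mp (by omega)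
  have hMov : ∀ q ∈ M, q.2 = true → u + 1 ≤ q.1 := by
    intro q hq hb
    have h1 := hMv q hq
    rcases Nat.lt_or_ge q.1 (u + 1) with h' | h'
    · have : q.1 = u := by omega
      have : q = ((u, true) : OPart) := Prod.ext this hb
      exact absurd (this ▸ hq) hnotmem
    · exact h'
  refine ⟨⟨?_, ?_, ?_⟩, ?_, ?_⟩
  · intro p hp
    rcases List.mem_append.mp hp with hp | hp
    · obtain ⟨q, hq, rfl⟩ := List.mem_map.mp hp
      simp [inc1]
    · have : p = ((u + 1, false) : OPart) := by simpa using hp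
      subst this
      simp
  · apply chain'_of_pairwise
    rw [List.pairwise_append]
    refine ⟨?_, by simp, ?_⟩
    · rw [List.pairwise_map]
      have hPM := (List.pairwise_append.mp (pairwise_of_chain' hchain)).1
      refine hPM.imp_of_mem ?_
      intro a b ha hb hab
      have h1 := hMv a ha
      have h2 := hMv b hb
      by_cases ba : a.2 <;> by_cases bb : b.2 <;>
        simp [okey, inc1, ba, bb] at hab ⊢ <;> omega
    · intro a ha b hb
      have hb' : b = ((u + 1, false) : OPart) := by simpa using hb
      subst hb'
      obtain ⟨q, hq, rfl⟩ := List.mem_map.mp ha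
      have h1 := hMv q hq
      by_cases bq : q.2
      · have := hMov q hq bq
        simp [okey, inc1, bq]
        omega
      · simp [okey, inc1, bq]
        omega
  · intro w
    rw [List.count_append]
    have h1 : List.count ((w, true) : OPart) [((u + 1, false) : OPart)] = 0 := by
      apply List.count_eq_zero.mpr
      simp
    rw [h1]
    rcases Nat.eq_zero_or_pos w with rfl | hwpos
    · have h0 : ((0, true) : OPart) ∉ M.map inc1 := by
        intro hm
        obtain ⟨q, hq, hd⟩ := List.mem_map.mp hm
        have := congrArg Prod.fst hd
        simp [inc1] at this
      rw [List.count_eq_zero.mpr h0]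
      omega
    · obtain ⟨w', rfl⟩ : ∃ w', w = w' + 1 := ⟨w - 1, by omega⟩
      rw [count_map_inc M w' true]
      have := hcount w'
      have h2 := count_le_concat M ((w', true) : OPart) ((u, true) : OPart)
      omega
  · intro j p q hp hq
    have hlen : j + k - 1 < (M.map inc1 ++ [((u + 1, false) : OPart)]).length :=
      (List.getElem?_eq_some_iff.mp hq).1
    rw [List.length_append, List.length_map, List.length_singleton] at hlen
    have hjM : j < M.length := by omega
    have hp' : p = inc1 M[j] := by
      rw [List.getElem?_append_left (by simpa using hjM), List.getElem?_map,
        List.getElem?_eq_getElem hjM] at hp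
      exact (Option.some_inj.mp hp).symm
    have horigp : (M ++ [((u, true) : OPart)])[j]? = some M[j] := by
      rw [List.getElem?_append_left hjM]
      exact List.getElem?_eq_getElem hjM
    rcases Nat.lt_or_ge (j + k - 1) M.length with hcase | hcase
    · have hq' : q = inc1 M[j + k - 1] := by
        rw [List.getElem?_append_left (by simpa using hcase), List.getElem?_map,
          List.getElem?_eq_getElem hcase] at hq
        exact (Option.some_inj.mp hq).symm
      have horigq : (M ++ [((u, true) : OPart)])[j + k - 1]? = some M[j + k - 1] := by
        rw [List.getElem?_append_left hcase]
        exact List.getElem?_eq_getElem hcase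
      have horig := hdiff j _ _ horigp horigq
      subst hp' hq'
      by_cases hb : M[j].2 <;> simp [inc1, hb] at horig ⊢ <;> omega
    · have heq : j + k - 1 = M.length := by omega
      have hq' : q = ((u + 1, false) : OPart) := by
        rw [heq] at hq
        have : (M.map inc1 ++ [((u + 1, false) : OPart)])[M.length]? =
            some ((u + 1, false) : OPart) := by
          have h3 : (M.map inc1).length = M.length := List.length_map _
          rw [← h3]
          simp
        rw [this] at hq
        exact (Option.some_inj.mp hq).symm
      have horigq : (M ++ [((u, true) : OPart)])[j + k - 1]? =
          some ((u, true) : OPart) := by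
        rw [heq]
        simp
      have horig := hdiff j _ _ horigp horigq
      subst hp' hq'
      by_cases hb : M[j].2 <;> simp [inc1, hb] at horig ⊢ <;> omega
  · have h0 : ((1, false) : OPart) ∉ M.map inc1 ++ [((u + 1, false) : OPart)] := by
      intro hm
      rcases List.mem_append.mp hm with hm | hm
      · obtain ⟨q, hq, hd⟩ := List.mem_map.mp hm
        have h1 := congrArg Prod.fst hd
        have h2 := hpos q (by simp [hq])
        simp [inc1] at h1
        omega
      · have : ((1, false) : OPart) = ((u + 1, false) : OPart) := by simpa using hm
        have := congrArg Prod.fst this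
        simp at this
        omega
    rw [List.count_eq_zero.mpr h0]

lemma decomp (L : List OPart) (p : OPart) (hp : L.getLast? = some p) :
    L = L.dropLast ++ [p] := by
  have hne : L ≠ [] := by rintro rfl; simp at hp
  have hgl := List.getLast?_eq_getLast_of_ne_nil hne
  rw [hgl, Option.some_inj] at hp
  conv_lhs => rw [← List.dropLast_append_getLast hne]
  rw [hp]

lemma fwdMap_concat' (M : List OPart) (v : ℕ) :
    fwdMap (M ++ [((v, false) : OPart)]) = M.map dec1 ++ [((v - 1, true) : OPart)] := by
  simp [fwdMap]

lemma bwdMap_concat' (M : List OPart) (u : ℕ) :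
    bwdMap (M ++ [((u, true) : OPart)]) = M.map inc1 ++ [((u + 1, false) : OPart)] := by
  simp [bwdMap]

lemma fwd_prop (k m n : ℕ) (hk : 2 ≤ k) (L : List OPart)
    (hL : DCondition k 1 L ∧ L.length = m ∧ osum L = n ∧ SmallestNonOverlined L) :
    DCondition k k (fwdMap L) ∧ (fwdMap L).length = m ∧ osum (fwdMap L) = n - m ∧
      SmallestOverlined (fwdMap L) := by
  obtain ⟨hD, hlen, hsum, hsm⟩ := hL
  obtain ⟨p, hp, hp2⟩ := hsm
  have hdec := decomp L p hp
  have hpfalse : p = ((p.1, false) : OPart) := Prod.ext rfl hp2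
  have hLM : L = L.dropLast ++ [((p.1, false) : OPart)] := by rw [← hpfalse]; exact hdec
  have hfwd : fwdMap L = (L.dropLast).map dec1 ++ [((p.1 - 1, true) : OPart)] := by
    conv_lhs => rw [hLM]
    rw [fwdMap_concat']
  have hDM : DCondition k 1 (L.dropLast ++ [((p.1, false) : OPart)]) := hLM ▸ hD
  have hposM : ∀ q ∈ L.dropLast, 1 ≤ q.1 := by
    intro q hq
    exact hD.1.1 q (by rw [hLM]; exact List.mem_append.mpr (Or.inl hq))
  have hv1 : 1 ≤ p.1 := hD.1.1 p (by rw [hdec]; simp)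
  have hlenM : L.dropLast.length + 1 = m := by
    have := hlen
    rw [hLM] at this
    simpa using this
  have hsumM : osum L.dropLast + p.1 = n := by
    have := hsum
    rw [hLM, osum_append] at this
    simpa [osum] using this
  refine ⟨?_, ?_, ?_, ?_⟩
  · rw [hfwd]
    exact fwd_mem k hk L.dropLast p.1 hDM
  · rw [hfwd]
    simpa using hlenM
  · rw [hfwd, osum_append]
    have h1 := osum_map_dec L.dropLast hposM
    have h2 : osum [((p.1 - 1, true) : OPart)] = p.1 - 1 := by simp [osum]
    rw [h2]
    omega
  · rw [hfwd]
    exact ⟨(p.1 - 1, true), by simp, rfl⟩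

lemma bwd_prop (k m n : ℕ) (hk : 2 ≤ k) (hmn : m ≤ n) (L : List OPart)
    (hL : DCondition k k L ∧ L.length = m ∧ osum L = n - m ∧ SmallestOverlined L) :
    DCondition k 1 (bwdMap L) ∧ (bwdMap L).length = m ∧ osum (bwdMap L) = n ∧
      SmallestNonOverlined (bwdMap L) := by
  obtain ⟨hD, hlen, hsum, hsm⟩ := hL
  obtain ⟨p, hp, hp2⟩ := hsm
  have hdec := decomp L p hp
  have hptrue : p = ((p.1, true) : OPart) := Prod.ext rfl hp2
  have hLM : L = L.dropLast ++ [((p.1, true) : OPart)] := by rw [← hptrue]; exact hdec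
  have hbwd : bwdMap L = (L.dropLast).map inc1 ++ [((p.1 + 1, false) : OPart)] := by
    conv_lhs => rw [hLM]
    rw [bwdMap_concat']
  have hDM : DCondition k k (L.dropLast ++ [((p.1, true) : OPart)]) := hLM ▸ hD
  have hlenM : L.dropLast.length + 1 = m := by
    have := hlen
    rw [hLM] at this
    simpa using this
  have hsumM : osum L.dropLast + p.1 = n - m := by
    have := hsum
    rw [hLM, osum_append] at this
    simpa [osum] using this
  refine ⟨?_, ?_, ?_, ?_⟩
  · rw [hbwd]
    exact bwd_mem k hk L.dropLast p.1 hDM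
  · rw [hbwd]
    simpa using hlenM
  · rw [hbwd, osum_append]
    have h1 := osum_map_inc L.dropLast
    have h2 : osum [((p.1 + 1, false) : OPart)] = p.1 + 1 := by simp [osum]
    rw [h2]
    omega
  · rw [hbwd]
    exact ⟨(p.1 + 1, false), by simp, rfl⟩

lemma bwd_fwd (L : List OPart) (hpos : ∀ q ∈ L, 1 ≤ q.1)
    (hsm : SmallestNonOverlined L) : bwdMap (fwdMap L) = L := by
  obtain ⟨p, hp, hp2⟩ := hsm
  have hdec := decomp L p hp
  have hpfalse : p = ((p.1, false) : OPart) := Prod.ext rfl hp2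
  have hLM : L = L.dropLast ++ [((p.1, false) : OPart)] := by rw [← hpfalse]; exact hdec
  have hv1 : 1 ≤ p.1 := hpos p (by rw [hdec]; simp)
  conv_lhs => rw [hLM, fwdMap_concat', bwdMap_concat']
  conv_rhs => rw [hLM]
  rw [List.map_map]
  congr 1
  · conv_rhs => rw [← List.map_id L.dropLast]
    apply List.map_congr_left
    intro q hq
    have hq1 : 1 ≤ q.1 := hpos q (by rw [hLM]; exact List.mem_append.mpr (Or.inl hq))
    show inc1 (dec1 q) = q
    apply Prod.ext
    · show q.1 - 1 + 1 = q.1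
      omega
    · rfl
  · have : p.1 - 1 + 1 = p.1 := by omega
    rw [this]

lemma fwd_bwd (L : List OPart) (hsm : SmallestOverlined L) : fwdMap (bwdMap L) = L := by
  obtain ⟨p, hp, hp2⟩ := hsm
  have hdec := decomp L p hp
  have hptrue : p = ((p.1, true) : OPart) := Prod.ext rfl hp2
  have hLM : L = L.dropLast ++ [((p.1, true) : OPart)] := by rw [← hptrue]; exact hdec
  conv_lhs => rw [hLM, bwdMap_concat', fwdMap_concat']
  conv_rhs => rw [hLM]
  rw [List.map_map]
  congr 1
  · conv_rhs => rw [← List.map_id L.dropLast]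
    apply List.map_congr_left
    intro q hq
    show dec1 (inc1 q) = q
    apply Prod.ext
    · show q.1 + 1 - 1 = q.1
      omega
    · rfl

lemma k1_absurd (L : List OPart) (h : DiffCond 1 L) (hne : L ≠ []) : False := by
  have h0 : 0 < L.length := List.length_pos_iff.mpr hne
  have hg : L[0]? = some L[0] := List.getElem?_eq_getElem h0
  have hd := h 0 L[0] L[0] hg (by simpa using hg)
  by_cases hb : L[0].2
  · rw [if_pos hb] at hd
    omega
  · rw [if_neg hb] at hd
    omega

end Stmt13Aux

open Stmt13Aux

/-- `G_{k,1}(m,n) = F_{k,k}(m, n−m)`, the right-hand side being `0` when `n − m < 0`. -/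
theorem stmt13 (k m n : ℕ) (hk : 1 ≤ k) :
    Gmn k 1 m n = if m ≤ n then Fmn k k m (n - m) else 0 := by
  rcases Nat.lt_or_ge n m with hmn | hmn
  · rw [if_neg (by omega)]
    unfold Gmn
    haveI : IsEmpty {L : List OPart // DCondition k 1 L ∧ L.length = m ∧ osum L = n ∧
        SmallestNonOverlined L} := by
      constructor
      rintro ⟨L, ⟨⟨hpos, -, -⟩, -, -⟩, hlen, hsum, -⟩
      have := length_le_osum L hpos
      omega
    exact Nat.card_of_isEmpty
  · rw [if_pos hmn]
    rcases eq_or_lt_of_le hk with hk1 | hk2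
    · have hkeq : k = 1 := hk1.symm
      subst hkeq
      have e1 : Gmn 1 1 m n = 0 := by
        unfold Gmn
        haveI : IsEmpty {L : List OPart // DCondition 1 1 L ∧ L.length = m ∧ osum L = n ∧
            SmallestNonOverlined L} := by
          constructor
          rintro ⟨L, ⟨⟨-, -, -⟩, hdiff, -⟩, -, -, ⟨p, hp, -⟩⟩
          exact k1_absurd L hdiff (by rintro rfl; simp at hp)
        exact Nat.card_of_isEmpty
      have e2 : Fmn 1 1 m (n - m) = 0 := by
        unfold Fmn
        haveI : IsEmpty {L : List OPart // DCondition 1 1 L ∧ L.length = m ∧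
            osum L = n - m ∧ SmallestOverlined L} := by
          constructor
          rintro ⟨L, ⟨⟨-, -, -⟩, hdiff, -⟩, -, -, ⟨p, hp, -⟩⟩
          exact k1_absurd L hdiff (by rintro rfl; simp at hp)
        exact Nat.card_of_isEmpty
      rw [e1, e2]
    · have hk2' : 2 ≤ k := hk2
      unfold Gmn Fmn
      refine Nat.card_congr ⟨fun x => ⟨fwdMap x.1, fwd_prop k m n hk2' x.1 x.2⟩,
        fun y => ⟨bwdMap y.1, bwd_prop k m n hk2' hmn y.1 y.2⟩, fun x => ?_, fun y => ?_⟩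
      · exact Subtype.ext (bwd_fwd x.1 x.2.1.1.1 x.2.2.2.2)
      · exact Subtype.ext (fwd_bwd y.1 y.2.2.2.2)
end
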